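/- Let G be a finite graph, q a fixed vertex, and suppose a vertex v with maximum distance d_G(v,q) from q is removed (v ≠ q). Then for every remaining vertex u in the same connected component of q, the distance from u to q in G − v equals the distance from u to q in G. -/

import Mathlib

open SimpleGraph

private lemma walk_to_induce {V : Type*} {G : SimpleGraph V} {s : Set V} {a b : V}
    (p : G.Walk a b) (ha : a ∈ s) (hb : b ∈ s) (hs : ∀ x ∈ p.support, x ∈ s) :
    ∃ q : (G.induce s).Walk ⟨a, ha⟩ ⟨b, hb⟩, q.length = p.length := by
  induction p with
  | nil => exact ⟨SimpleGraph.Walk.nil, rfl⟩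
  | @cons x y z h p ih =>
    have hy : y ∈ s := hs y (by simp [SimpleGraph.Walk.support_cons])
    obtain ⟨q, hq⟩ := ih hy hb (fun w hw => hs w (by simp [SimpleGraph.Walk.support_cons, hw]))
    exact ⟨SimpleGraph.Walk.cons (by exact h : (G.induce s).Adj ⟨x, ha⟩ ⟨y, hy⟩) q, by
      exact congrArg Nat.succ hq⟩

/-- If `v ≠ q` is a vertex at maximum distance from `q` in a finite connected graph `G`,
then for every vertex `u ≠ v` reachable from `q` in `G − v`, the distance from `u` to `q`
in `G − v` equals the distance in `G`. -/
theorem remove_farthest_preserves_dist {V : Type*} [Fintype V] (G : SimpleGraph V)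
    (hconn : G.Connected) (q v : V) (hvq : v ≠ q)
    (hmax : ∀ w : V, G.edist w q ≤ G.edist v q)
    (u : V) (hu : u ≠ v)
    (hreach : (G.induce {x : V | x ≠ v}).Reachable ⟨u, hu⟩ ⟨q, hvq.symm⟩) :
    (G.induce {x : V | x ≠ v}).edist ⟨u, hu⟩ ⟨q, hvq.symm⟩ = G.edist u q := by
  classical
  apply le_antisymm
  · -- take a shortest walk in G; it avoids v
    obtain ⟨p, hp⟩ := (hconn u q).exists_walk_length_eq_edist
    have hv : v ∉ p.support := by
      intro hv
      have hsplit := congrArg SimpleGraph.Walk.length (p.take_spec hv)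
      rw [SimpleGraph.Walk.length_append] at hsplit
      have h1 : 1 ≤ (p.takeUntil v hv).length := by
        rcases Nat.eq_zero_or_pos (p.takeUntil v hv).length with h0 | h0
        · exact absurd (SimpleGraph.Walk.eq_of_length_eq_zero h0) hu
        · exact h0
      have h2 : G.edist v q ≤ (p.dropUntil v hv).length := SimpleGraph.edist_le _
      have h3 : G.edist u q ≤ (p.dropUntil v hv).length := (hmax u).trans h2
      rw [← hp] at h3
      have h4 : p.length ≤ (p.dropUntil v hv).length := by exact_mod_cast h3
      omega
    have hsupp : ∀ x ∈ p.support, x ∈ {x : V | x ≠ v} := fun x hx => by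
      intro hxv; exact hv (hxv ▸ hx)
    obtain ⟨w, hw⟩ := walk_to_induce p hu hvq.symm hsupp
    calc (G.induce {x : V | x ≠ v}).edist ⟨u, hu⟩ ⟨q, hvq.symm⟩ ≤ w.length :=
          SimpleGraph.edist_le _
      _ = p.length := by exact_mod_cast hw
      _ = G.edist u q := hp
  · obtain ⟨w, hw⟩ := hreach.exists_walk_length_eq_edist
    have := SimpleGraph.edist_le (w.map (SimpleGraph.Embedding.induce {x : V | x ≠ v}).toHom)
    rw [SimpleGraph.Walk.length_map] at this
    rw [← hw]
    exact this
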